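/- Let C be a binary self-dual code of length n (a subspace of F_2^n equal to its dual under the standard dot product) and let σ be an automorphism of C (a coordinate permutation preserving C) of odd prime order p, whose cycle decomposition consists of c cycles of length p and f = n - cp fixed points. Define F_σ(C) = {v ∈ C : σ(v) = v} and E_σ(C) = {v ∈ C : the restriction of v to each cycle and each fixed point has even weight}. Then C = F_σ(C) ⊕ E_σ(C) (internal direct sum of subspaces), dim F_σ(C) = (c+f)/2, and dim E_σ(C) = c(p-1)/2. -/

import Mathlib

open Finset

/-- Hamming weight of a binary vector. -/
def wt {ι : Type*} [Fintype ι] (v : ι → ZMod 2) : ℕ :=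
  (Finset.univ.filter fun i => v i ≠ 0).card

/-- Dual of a binary code under the standard dot product. -/
def dualCode {ι : Type*} [Fintype ι] (C : Submodule (ZMod 2) (ι → ZMod 2)) :
    Submodule (ZMod 2) (ι → ZMod 2) where
  carrier := {x | ∀ c ∈ C, ∑ i, x i * c i = 0}
  add_mem' := by
    intro a b ha hb c hc
    have := ha c hc; have := hb c hc
    simp only [Pi.add_apply, add_mul, Finset.sum_add_distrib]
    simp [ha c hc, hb c hc]
  zero_mem' := by intro c hc; simp
  smul_mem' := by
    intro r a ha c hc
    simp only [Pi.smul_apply, smul_eq_mul, mul_assoc, ← Finset.mul_sum]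
    simp [ha c hc]

/-- Fixed subcode F_σ(C). -/
def fixedCode {ι : Type*} (σ : Equiv.Perm ι) (C : Submodule (ZMod 2) (ι → ZMod 2)) :
    Submodule (ZMod 2) (ι → ZMod 2) where
  carrier := {v | v ∈ C ∧ v ∘ σ = v}
  add_mem' := by
    rintro a b ⟨ha, ha'⟩ ⟨hb, hb'⟩
    refine ⟨C.add_mem ha hb, ?_⟩
    funext i
    simpa using congrFun (congrArg₂ (· + ·) ha' hb') i
  zero_mem' := ⟨C.zero_mem, rfl⟩
  smul_mem' := by
    rintro r a ⟨ha, ha'⟩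
    exact ⟨C.smul_mem r ha, by funext i; simpa using congrArg (r • ·) (congrFun ha' i)⟩

/-- Subcode E_σ(C): codewords with even weight on each cycle (and zero on fixed points). -/
def evenCode {ι : Type*} (p : ℕ) (σ : Equiv.Perm ι) (C : Submodule (ZMod 2) (ι → ZMod 2)) :
    Submodule (ZMod 2) (ι → ZMod 2) where
  carrier := {v | v ∈ C ∧ ∀ i, ∑ k ∈ Finset.range p, v ((σ ^ k) i) = 0}
  add_mem' := by
    rintro a b ⟨ha, ha'⟩ ⟨hb, hb'⟩
    refine ⟨C.add_mem ha hb, fun i => ?_⟩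
    simp [Finset.sum_add_distrib, ha' i, hb' i]
  zero_mem' := ⟨C.zero_mem, by simp⟩
  smul_mem' := by
    rintro r a ⟨ha, ha'⟩
    refine ⟨C.smul_mem r ha, fun i => ?_⟩
    simp only [Pi.smul_apply, smul_eq_mul]
    rw [← Finset.mul_sum, ha' i, mul_zero]

/-! ### Auxiliary development -/

open Module

section Dot
variable {ι : Type*} [Fintype ι]

noncomputable def dotB : LinearMap.BilinForm (ZMod 2) (ι → ZMod 2) :=
  LinearMap.mk₂ (ZMod 2) (fun x y => ∑ i, x i * y i)
    (by intro x x' y; simp [add_mul, Finset.sum_add_distrib])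
    (by intro r x y; simp [Finset.mul_sum, mul_assoc])
    (by intro x y y'; simp [mul_add, Finset.sum_add_distrib])
    (by intro r x y; simp [Finset.mul_sum, mul_left_comm])

lemma dotB_apply (x y : ι → ZMod 2) : dotB x y = ∑ i, x i * y i := rfl

lemma dotB_isRefl : (dotB (ι := ι)).IsRefl := by
  intro x y h
  simpa [dotB_apply, mul_comm] using h

lemma dotB_nondeg : (dotB (ι := ι)).Nondegenerate := by
  classical
  refine ⟨fun x hx => ?_, fun x hx => ?_⟩
  all_goals
    funext j
    have := hx (Pi.single j 1)
    simpa [dotB_apply, Pi.single_apply, mul_ite, ite_mul] using this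

lemma dualCode_eq_orthogonal (C : Submodule (ZMod 2) (ι → ZMod 2)) :
    dualCode C = dotB.orthogonal C := by
  ext x
  simp only [LinearMap.BilinForm.mem_orthogonal_iff]
  constructor
  · intro h c hc
    simpa [LinearMap.BilinForm.IsOrtho, dotB_apply, mul_comm] using h c hc
  · intro h c hc
    simpa [LinearMap.BilinForm.IsOrtho, dotB_apply, mul_comm] using h c hc

lemma dualCode_finrank (C : Submodule (ZMod 2) (ι → ZMod 2)) :
    finrank (ZMod 2) C + finrank (ZMod 2) (dualCode C) = Fintype.card ι := by
  rw [dualCode_eq_orthogonal, LinearMap.BilinForm.finrank_orthogonal dotB_nondeg]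
  have h := Submodule.finrank_le C
  have : finrank (ZMod 2) (ι → ZMod 2) = Fintype.card ι := by
    simp [Module.finrank_pi]
  omega

lemma selfdual_finrank (C : Submodule (ZMod 2) (ι → ZMod 2)) (h : C = dualCode C) :
    finrank (ZMod 2) C + finrank (ZMod 2) C = Fintype.card ι := by
  have h2 := dualCode_finrank C
  rwa [← h] at h2
end Dot

section Orb
variable {ι : Type*} [Fintype ι] (σ : Equiv.Perm ι)

omit [Fintype ι] in
lemma pow_fix {τ : Equiv.Perm ι} {x : ι} (h : τ x = x) (k : ℕ) : (τ ^ k) x = x := by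
  induction k with
  | zero => rfl
  | succ m ih => rw [pow_succ]; simp [Equiv.Perm.mul_apply, ih, h]

def orbSetoid : Setoid ι where
  r i j := ∃ k : ℕ, (σ ^ k) i = j
  iseqv := by
    constructor
    · intro i; exact ⟨0, rfl⟩
    · rintro i j ⟨k, rfl⟩
      have ho : 0 < orderOf σ := orderOf_pos σ
      refine ⟨k * (orderOf σ - 1), ?_⟩
      have h1 : (σ ^ (k * (orderOf σ - 1))) ((σ ^ k) i) = (σ ^ (k * (orderOf σ - 1) + k)) i := by
        rw [pow_add]; rfl
      rw [h1]
      obtain ⟨m, hm⟩ := Nat.exists_eq_add_of_lt ho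
      have hk : k * (orderOf σ - 1) + k = k * orderOf σ := by
        have : orderOf σ - 1 = m := by omega
        rw [this, hm]; ring
      rw [hk, mul_comm, pow_mul, pow_orderOf_eq_one, one_pow]; rfl
    · rintro i j l ⟨k, rfl⟩ ⟨m, rfl⟩
      exact ⟨m + k, by rw [pow_add]; rfl⟩

abbrev OrbQ := Quotient (orbSetoid σ)

noncomputable instance : Fintype (OrbQ σ) := by
  classical exact Fintype.ofFinite _

def qk (i : ι) : OrbQ σ := Quotient.mk (orbSetoid σ) i

lemma qk_surj : Function.Surjective (qk σ) := Quotient.exists_rep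

lemma qk_apply (i : ι) (k : ℕ) : qk σ ((σ ^ k) i) = qk σ i :=
  Quot.sound ((orbSetoid σ).iseqv.symm ⟨k, rfl⟩)

lemma qk_sigma (i : ι) : qk σ (σ i) = qk σ i := by
  simpa using qk_apply σ i 1

lemma qk_exact {i j : ι} (h : qk σ i = qk σ j) : ∃ k : ℕ, (σ ^ k) i = j :=
  Quotient.exact h

noncomputable def fibQ (q : OrbQ σ) : Finset ι :=
  @Finset.filter _ (fun i => qk σ i = q) (Classical.decPred _) univ

lemma mem_fibQ {q : OrbQ σ} {i : ι} : i ∈ fibQ σ q ↔ qk σ i = q := by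
  simp [fibQ]

lemma sum_fibQ {M : Type*} [AddCommMonoid M] (g : ι → M) :
    ∑ q : OrbQ σ, ∑ i ∈ fibQ σ q, g i = ∑ i, g i := by
  classical
  rw [← Finset.sum_fiberwise (univ : Finset ι) (fun i => qk σ i) g]
  refine Finset.sum_congr rfl fun q _ => Finset.sum_congr ?_ fun _ _ => rfl
  ext i; simp [mem_fibQ]

lemma qk_out (q : OrbQ σ) : qk σ q.out = q := Quotient.out_eq q

variable {p : ℕ} (hp : p.Prime) (hord : orderOf σ = p)
include hp hord

omit [Fintype ι] in
lemma fix_of_pow_fix {x : ι} {d : ℕ} (hd : 0 < d) (hdp : d < p)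
    (h : (σ ^ d) x = x) : σ x = x := by
  have hcop : Nat.Coprime d p :=
    (Nat.coprime_comm.mp (hp.coprime_iff_not_dvd.mpr (Nat.not_dvd_of_pos_of_lt hd hdp)))
  obtain ⟨m, -, hm⟩ := Nat.exists_mul_mod_eq_one_of_coprime hcop hp.one_lt
  have h1 : σ = σ ^ (d * m) := by
    rw [← pow_mod_orderOf, hord, hm, pow_one]
  calc σ x = (σ ^ (d * m)) x := by rw [← h1]
    _ = ((σ ^ d) ^ m) x := by rw [pow_mul]
    _ = x := pow_fix h m

omit hp hord in
lemma fibQ_of_fix {i : ι} (h : σ i = i) : fibQ σ (qk σ i) = {i} := by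
  ext j
  simp only [mem_fibQ, Finset.mem_singleton]
  constructor
  · intro hj
    obtain ⟨k, hk⟩ := qk_exact σ hj.symm
    rw [pow_fix h k] at hk
    exact hk.symm
  · rintro rfl; rfl

lemma fibQ_of_nfix [DecidableEq ι] {i : ι} (h : σ i ≠ i) :
    fibQ σ (qk σ i) = (Finset.range p).image (fun k => (σ ^ k) i) := by
  classical
  ext j
  simp only [mem_fibQ, Finset.mem_image, Finset.mem_range]
  constructor
  · intro hj
    obtain ⟨k, hk⟩ := qk_exact σ hj.symm
    exact ⟨k % p, Nat.mod_lt _ hp.pos, by rw [← hord, pow_mod_orderOf, hk]⟩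
  · rintro ⟨k, _, rfl⟩
    exact qk_apply σ i k

lemma injOn_pow {i : ι} (h : σ i ≠ i) :
    Set.InjOn (fun k => (σ ^ k) i) (Finset.range p) := by
  have key : ∀ k l : ℕ, k < l → l < p → (σ ^ k) i = (σ ^ l) i → False := by
    intro k l hkl hlp heq
    have h1 : (σ ^ (l - k)) ((σ ^ k) i) = (σ ^ k) i := by
      have e1 : (σ ^ (l - k)) ((σ ^ k) i) = (σ ^ (l - k + k)) i := by rw [pow_add]; rfl
      rw [e1, Nat.sub_add_cancel hkl.le, ← heq]
    have h2 : σ ((σ ^ k) i) = (σ ^ k) i :=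
      fix_of_pow_fix σ hp hord (by omega) (by omega) h1
    have h3 : (σ ^ k) (σ i) = (σ ^ k) i := by
      have e2 : (σ ^ k) (σ i) = (σ ^ k * σ) i := rfl
      have e3 : σ ((σ ^ k) i) = (σ * σ ^ k) i := rfl
      rw [e2, ← pow_succ, pow_succ', ← e3, h2]
    exact h ((σ ^ k).injective h3)
  intro k hk l hl heq
  simp only [Finset.coe_range, Set.mem_Iio] at hk hl
  rcases lt_trichotomy k l with h' | h' | h'
  · exact absurd (key k l h' hl heq) (by simp)
  · exact h'
  · exact absurd (key l k h' hk heq.symm) (by simp)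

lemma card_fibQ_fix {q : OrbQ σ} (h : σ q.out = q.out) : (fibQ σ q).card = 1 := by
  rw [← qk_out σ q, fibQ_of_fix σ h]; simp

lemma card_fibQ_nfix {q : OrbQ σ} (h : ¬ σ q.out = q.out) : (fibQ σ q).card = p := by
  classical
  rw [← qk_out σ q, fibQ_of_nfix σ hp hord h,
    Finset.card_image_of_injOn (injOn_pow σ hp hord h)]
  simp
end Orb

section Z2
variable {ι : Type*} [Fintype ι] (σ : Equiv.Perm ι)

lemma odd_nsmul_z2 {m : ℕ} (hm : Odd m) (x : ZMod 2) : m • x = x := by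
  obtain ⟨k, rfl⟩ := hm
  rw [nsmul_eq_mul]
  push_cast
  have h2 : (2 : ZMod 2) = 0 := rfl
  rw [h2]
  ring

omit [Fintype ι] in
lemma fix_const {v : ι → ZMod 2} (hv : v ∘ σ = v) (i : ι) (k : ℕ) :
    v ((σ ^ k) i) = v i := by
  induction k with
  | zero => rfl
  | succ m ih =>
    have e : (σ ^ (m + 1)) i = σ ((σ ^ m) i) := by rw [pow_succ']; rfl
    rw [e]
    have h1 := congrFun hv ((σ ^ m) i)
    simp only [Function.comp_apply] at h1
    rw [h1, ih]

def liftQ : (OrbQ σ → ZMod 2) →ₗ[ZMod 2] (ι → ZMod 2) where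
  toFun w i := w (qk σ i)
  map_add' _ _ := rfl
  map_smul' _ _ := rfl

lemma liftQ_apply (w : OrbQ σ → ZMod 2) (i : ι) : liftQ σ w i = w (qk σ i) := rfl

lemma liftQ_inj : Function.Injective (liftQ σ) := by
  intro w w' h
  funext q
  obtain ⟨i, rfl⟩ := qk_surj σ q
  exact congrFun h i

lemma liftQ_comp_sigma (w : OrbQ σ → ZMod 2) : liftQ σ w ∘ σ = liftQ σ w :=
  funext fun i => congrArg w (qk_sigma σ i)

variable {p : ℕ} (hp : p.Prime) (hord : orderOf σ = p) (hodd : Odd p)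
include hp hord hodd

lemma card_fibQ_odd (q : OrbQ σ) : Odd (fibQ σ q).card := by
  by_cases h : σ q.out = q.out
  · rw [card_fibQ_fix σ hp hord h]; exact odd_one
  · rw [card_fibQ_nfix σ hp hord h]; exact hodd

lemma sum_fibQ_lift (w : OrbQ σ → ZMod 2) (g : ι → ZMod 2) (q : OrbQ σ) :
    ∑ i ∈ fibQ σ q, liftQ σ w i * g i = w q * ∑ i ∈ fibQ σ q, g i := by
  rw [Finset.mul_sum]
  refine Finset.sum_congr rfl fun i hi => ?_
  rw [liftQ_apply, (mem_fibQ σ).mp hi]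

lemma sum_fibQ_lift_lift (w w' : OrbQ σ → ZMod 2) :
    ∑ i, liftQ σ w i * liftQ σ w' i = ∑ q, w q * w' q := by
  rw [← sum_fibQ σ (fun i => liftQ σ w i * liftQ σ w' i)]
  refine Finset.sum_congr rfl fun q _ => ?_
  rw [sum_fibQ_lift σ hp hord hodd]
  have : ∑ i ∈ fibQ σ q, liftQ σ w' i = (fibQ σ q).card • w' q := by
    rw [Finset.sum_congr rfl fun i hi => ?_, Finset.sum_const]
    rw [liftQ_apply, (mem_fibQ σ).mp hi]
  rw [this, odd_nsmul_z2 (card_fibQ_odd σ hp hord hodd q)]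

lemma sum_fibQ_even (e : ι → ZMod 2)
    (he : ∀ i, ∑ k ∈ Finset.range p, e ((σ ^ k) i) = 0) (q : OrbQ σ) :
    ∑ i ∈ fibQ σ q, e i = 0 := by
  classical
  by_cases h : σ q.out = q.out
  · rw [← qk_out σ q, fibQ_of_fix σ h, Finset.sum_singleton]
    have h1 := he q.out
    have h2 : ∀ k ∈ Finset.range p, e ((σ ^ k) q.out) = e q.out :=
      fun k _ => congrArg e (pow_fix h k)
    rw [Finset.sum_congr rfl h2, Finset.sum_const, Finset.card_range] at h1
    rwa [odd_nsmul_z2 hodd] at h1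
  · rw [← qk_out σ q, fibQ_of_nfix σ hp hord h,
      Finset.sum_image fun k hk l hl hkl => injOn_pow σ hp hord h (by simpa using hk) (by simpa using hl) hkl]
    exact he q.out

end Z2

section Count
variable {ι : Type*} [Fintype ι] (σ : Equiv.Perm ι) {p : ℕ}
  (hp : p.Prime) (hord : orderOf σ = p)
include hp hord

lemma card_orbQ [DecidableEq ι] {c f : ℕ} (hfix : (Finset.univ.filter fun i => σ i = i).card = f)
    (hn : Fintype.card ι = c * p + f) : Fintype.card (OrbQ σ) = c + f := by
  classical
  have hsum : ∑ q : OrbQ σ, (fibQ σ q).card = Fintype.card ι := by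
    have h0 := sum_fibQ σ (fun _ : ι => (1 : ℕ))
    simpa [Finset.sum_const, Finset.card_univ] using h0
  set S := Finset.univ.filter (fun q : OrbQ σ => σ q.out = q.out) with hSdef
  have hsplit : ∑ q : OrbQ σ, (fibQ σ q).card = S.card + Sᶜ.card * p := by
    rw [← Finset.sum_filter_add_sum_filter_not Finset.univ
      (fun q : OrbQ σ => σ q.out = q.out) (fun q => (fibQ σ q).card)]
    congr 1
    · rw [Finset.sum_congr rfl fun q hq => card_fibQ_fix σ hp hord (Finset.mem_filter.mp hq).2]
      simp
      rfl
    · rw [Finset.sum_congr rfl fun q hq => card_fibQ_nfix σ hp hord (Finset.mem_filter.mp hq).2]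
      rw [Finset.sum_const, smul_eq_mul]
      congr 1
      rw [hSdef, Finset.compl_filter]
  have hout : ∀ i : ι, σ i = i → (qk σ i).out = i := by
    intro i hi
    have hm : (qk σ i).out ∈ fibQ σ (qk σ i) := (mem_fibQ σ).mpr (qk_out σ _)
    rw [fibQ_of_fix σ hi] at hm
    exact Finset.mem_singleton.mp hm
  have hS : S.card = f := by
    rw [← hfix]
    refine Finset.card_bij (fun (q : OrbQ σ) _ => q.out) ?_ ?_ ?_
    · intro q hq
      simp only [hSdef, Finset.mem_filter] at hq ⊢
      exact ⟨Finset.mem_univ _, hq.2⟩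
    · intro q hq q' hq' h
      rw [← qk_out σ q, ← qk_out σ q', h]
    · intro i hi
      simp only [Finset.mem_filter] at hi
      refine ⟨qk σ i, ?_, hout i hi.2⟩
      simp only [hSdef, Finset.mem_filter]
      exact ⟨Finset.mem_univ _, by rw [hout i hi.2]; exact hi.2⟩
  have hcards : S.card + Sᶜ.card = Fintype.card (OrbQ σ) := by
    rw [Finset.card_add_card_compl]
  have ht : Sᶜ.card * p = c * p := by omega
  have : Sᶜ.card = c := Nat.eq_of_mul_eq_mul_right hp.pos ht
  omega
end Count

theorem statement0 {n p c f : ℕ} (hp : p.Prime) (hodd : Odd p)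
    (C : Submodule (ZMod 2) (Fin n → ZMod 2))
    (hself : C = dualCode C)
    (σ : Equiv.Perm (Fin n))
    (haut : ∀ v, v ∈ C ↔ v ∘ σ ∈ C)
    (hord : orderOf σ = p)
    (hfix : (Finset.univ.filter fun i => σ i = i).card = f)
    (hn : n = c * p + f) :
    Disjoint (fixedCode σ C) (evenCode p σ C) ∧
    fixedCode σ C ⊔ evenCode p σ C = C ∧
    Module.finrank (ZMod 2) (fixedCode σ C) = (c + f) / 2 ∧
    Module.finrank (ZMod 2) (evenCode p σ C) = c * (p - 1) / 2 := by
  classical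
  have hz2 : ∀ x : ZMod 2, x + x = 0 := by decide
  have hz2f : ∀ w : Fin n → ZMod 2, w + w = 0 := fun w => funext fun i => hz2 (w i)
  have hpow : ∀ v ∈ C, ∀ k : ℕ, v ∘ ⇑(σ ^ k) ∈ C := by
    intro v hv k
    induction k with
    | zero => simpa using hv
    | succ m ih =>
      have e : v ∘ ⇑(σ ^ (m + 1)) = (v ∘ ⇑(σ ^ m)) ∘ ⇑σ := by
        funext i
        simp only [Function.comp_apply]
        congr 1
      rw [e]
      exact (haut _).mp ih
  set T : (Fin n → ZMod 2) → (Fin n → ZMod 2) :=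
    fun v i => ∑ k ∈ Finset.range p, v ((σ ^ k) i) with hT
  have hTmem : ∀ v ∈ C, T v ∈ C := by
    intro v hv
    have e : T v = ∑ k ∈ Finset.range p, (v ∘ ⇑(σ ^ k)) := by
      funext i; simp [hT, Finset.sum_apply]
    rw [e]
    exact Submodule.sum_mem _ fun k _ => hpow v hv k
  have hsig_p : σ ^ p = 1 := by rw [← hord]; exact pow_orderOf_eq_one σ
  have hTfix : ∀ v, T v ∘ ⇑σ = T v := by
    intro v
    funext i
    simp only [Function.comp_apply, hT]
    have key : ∀ k : ℕ, (σ ^ k) (σ i) = (σ ^ (k + 1)) i := fun k => by rw [pow_succ]; rfl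
    have step1 : ∑ k ∈ Finset.range p, v ((σ ^ k) (σ i))
        = ∑ k ∈ Finset.range p, v ((σ ^ (k + 1)) i) :=
      Finset.sum_congr rfl fun k _ => by rw [key]
    rw [step1]
    have h1 := Finset.sum_range_succ' (fun k => v ((σ ^ k) i)) p
    have h2 := Finset.sum_range_succ (fun k => v ((σ ^ k) i)) p
    have h3 : v ((σ ^ p) i) = v ((σ ^ 0) i) := by rw [hsig_p]; rfl
    have h4 := h1.symm.trans h2
    simp only [h3] at h4
    exact add_right_cancel h4
  have hTid : ∀ v : Fin n → ZMod 2, v ∘ ⇑σ = v → T v = v := by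
    intro v hv
    funext i
    simp only [hT]
    rw [Finset.sum_congr rfl fun k _ => fix_const σ hv i k, Finset.sum_const,
      Finset.card_range, odd_nsmul_z2 hodd]
  have hdisj : Disjoint (fixedCode σ C) (evenCode p σ C) := by
    rw [Submodule.disjoint_def]
    intro v hvF hvE
    have h1 : T v = v := hTid v hvF.2
    funext i
    have h2 := hvE.2 i
    rw [show (∑ k ∈ Finset.range p, v ((σ ^ k) i)) = T v i from rfl, h1] at h2
    exact h2
  have hsup : fixedCode σ C ⊔ evenCode p σ C = C := by
    apply le_antisymm
    · exact sup_le (fun v hv => hv.1) (fun v hv => hv.1)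
    · intro v hv
      refine Submodule.mem_sup.mpr ⟨T v, ⟨hTmem v hv, hTfix v⟩,
        T v + v, ⟨C.add_mem (hTmem v hv) hv, ?_⟩, ?_⟩
      · intro i
        have hTc : ∀ k : ℕ, T v ((σ ^ k) i) = T v i := fun k => fix_const σ (hTfix v) i k
        calc ∑ k ∈ Finset.range p, (T v + v) ((σ ^ k) i)
            = ∑ k ∈ Finset.range p, (T v ((σ ^ k) i) + v ((σ ^ k) i)) := rfl
          _ = (∑ k ∈ Finset.range p, T v ((σ ^ k) i)) + ∑ k ∈ Finset.range p, v ((σ ^ k) i) :=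
              Finset.sum_add_distrib
          _ = (∑ k ∈ Finset.range p, T v i) + T v i := by
              rw [Finset.sum_congr rfl fun k _ => hTc k]
          _ = p • T v i + T v i := by rw [Finset.sum_const, Finset.card_range]
          _ = T v i + T v i := by rw [odd_nsmul_z2 hodd]
          _ = 0 := hz2 _
      · rw [← add_assoc, hz2f (T v), zero_add]
  set D := Submodule.comap (liftQ σ) C with hD
  have hliftout : ∀ v : Fin n → ZMod 2, v ∘ ⇑σ = v →
      liftQ σ (fun q => v q.out) = v := by
    intro v hv
    funext i
    obtain ⟨k, hk⟩ := qk_exact σ (show qk σ (qk σ i).out = qk σ i from qk_out σ _)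
    rw [liftQ_apply]
    calc v (qk σ i).out = v ((σ ^ k) (qk σ i).out) := (fix_const σ hv _ k).symm
      _ = v i := by rw [hk]
  have hmap : Submodule.map (liftQ σ) D = fixedCode σ C := by
    ext v
    simp only [Submodule.mem_map, Submodule.mem_comap, hD]
    constructor
    · rintro ⟨w, hw, rfl⟩
      exact ⟨hw, liftQ_comp_sigma σ w⟩
    · rintro ⟨hvC, hvfix⟩
      exact ⟨fun q => v q.out, by rw [hliftout v hvfix]; exact hvC,
        hliftout v hvfix⟩
  have hDfinrank : Module.finrank (ZMod 2) (fixedCode σ C) = Module.finrank (ZMod 2) D := by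
    rw [← hmap]
    exact (Submodule.equivMapOfInjective _ (liftQ_inj σ) D).finrank_eq.symm
  have hDd : D = dualCode D := by
    ext w
    constructor
    · intro hw c hc
      rw [← sum_fibQ_lift_lift σ hp hord hodd]
      have h1 : liftQ σ w ∈ dualCode C := hself ▸ (Submodule.mem_comap.mp hw)
      exact h1 (liftQ σ c) (Submodule.mem_comap.mp hc)
    · intro hw
      show liftQ σ w ∈ C
      rw [hself]
      intro v hv
      rw [← hsup] at hv
      obtain ⟨u, hu, e, he, rfl⟩ := Submodule.mem_sup.mp hv
      have hsplit : ∑ i, liftQ σ w i * (u + e) i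
          = (∑ i, liftQ σ w i * u i) + ∑ i, liftQ σ w i * e i := by
        simp only [Pi.add_apply, mul_add, Finset.sum_add_distrib]
      rw [hsplit]
      rw [← hmap] at hu
      obtain ⟨w', hw', rfl⟩ := Submodule.mem_map.mp hu
      have hfirst : ∑ i, liftQ σ w i * liftQ σ w' i = 0 := by
        rw [sum_fibQ_lift_lift σ hp hord hodd]
        exact hw w' hw'
      have hsecond : ∑ i, liftQ σ w i * e i = 0 := by
        rw [← sum_fibQ σ (fun i => liftQ σ w i * e i)]
        rw [Finset.sum_congr rfl fun q _ => sum_fibQ_lift σ hp hord hodd w e q]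
        rw [Finset.sum_congr rfl fun q _ => ?_, Finset.sum_const_zero]
        rw [sum_fibQ_even σ hp hord hodd e he.2 q, mul_zero]
      rw [hfirst, hsecond, add_zero]
  have hcard : Fintype.card (OrbQ σ) = c + f :=
    card_orbQ σ hp hord hfix (by simpa using hn)
  have hDself := selfdual_finrank D hDd
  rw [hcard] at hDself
  have hCself := selfdual_finrank C hself
  rw [Fintype.card_fin] at hCself
  have hFE : Module.finrank (ZMod 2) (fixedCode σ C) + Module.finrank (ZMod 2) (evenCode p σ C)
      = Module.finrank (ZMod 2) C := by
    have h := Submodule.finrank_sup_add_finrank_inf_eq (fixedCode σ C) (evenCode p σ C)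
    rw [hsup, disjoint_iff.mp hdisj, finrank_bot, add_zero] at h
    exact h.symm
  have hmul : c * (p - 1) + c = c * p := by
    have hp1 : p - 1 + 1 = p := Nat.succ_pred_eq_of_pos hp.pos
    calc c * (p - 1) + c = c * ((p - 1) + 1) := by ring
      _ = c * p := by rw [hp1]
  rw [hDfinrank] at hFE ⊢
  refine ⟨hdisj, hsup, ?_, ?_⟩ <;> omega
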